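/- Let $q \equiv 3 \pmod 4$ be a prime power. Then there exists a Hadamard matrix of order $q + 1$. -/

import Mathlib

/-- A Hadamard matrix: ±1 entries and H Hᵀ = n I. -/
def IsHadamard {n : ℕ} (H : Matrix (Fin n) (Fin n) ℤ) : Prop :=
  (∀ i j, H i j = 1 ∨ H i j = -1) ∧
    H * H.transpose = (n : ℤ) • (1 : Matrix (Fin n) (Fin n) ℤ)

open Finset

section Aux

variable {F : Type*} [Field F] [Fintype F] [DecidableEq F]

lemma paley_sum_char_sub (hF : ringChar F ≠ 2) (b : F) :
    ∑ c : F, quadraticChar F (b - c) = 0 := by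
  exact (Fintype.sum_equiv (Equiv.subLeft b) (fun c => quadraticChar F (b - c))
    (fun x => quadraticChar F x) (fun c => rfl)).trans (quadraticChar_sum_zero hF)

lemma paley_corr (hF : ringChar F ≠ 2) {d : F} (hd : d ≠ 0) :
    ∑ u : F, quadraticChar F u * quadraticChar F (u - d) = -1 := by
  have key : ∀ u : F, u ≠ 0 → quadraticChar F u * quadraticChar F (u - d)
      = quadraticChar F (1 - d * u⁻¹) := by
    intro u hu
    have h : u - d = u * (1 - d * u⁻¹) := by field_simp
    rw [h, map_mul, ← mul_assoc, ← sq, quadraticChar_sq_one hu, one_mul]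
  rw [← Finset.add_sum_erase Finset.univ _ (Finset.mem_univ (0 : F))]
  rw [show quadraticChar F 0 * quadraticChar F (0 - d) = 0 by simp, zero_add]
  have h2 : ∑ u ∈ Finset.univ.erase (0 : F),
      quadraticChar F u * quadraticChar F (u - d)
      = ∑ y ∈ Finset.univ.erase (1 : F), quadraticChar F y := by
    refine Finset.sum_nbij' (fun u => 1 - d * u⁻¹) (fun y => d * (1 - y)⁻¹) ?_ ?_ ?_ ?_ ?_
    · intro u hu
      simp only [Finset.mem_erase, Finset.mem_univ, and_true] at hu ⊢
      intro h
      have : d * u⁻¹ = 0 := by linear_combination -h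
      exact hd (by simpa [hu] using this)
    · intro y hy
      simp only [Finset.mem_erase, Finset.mem_univ, and_true] at hy ⊢
      have h1 : (1 : F) - y ≠ 0 := sub_ne_zero.mpr (Ne.symm hy)
      exact mul_ne_zero hd (inv_ne_zero h1)
    · intro u hu
      simp only [Finset.mem_erase, Finset.mem_univ, and_true] at hu
      field_simp
      rw [sub_sub_cancel, div_self hd]
    · intro y hy
      simp only [Finset.mem_erase, Finset.mem_univ, and_true] at hy
      have h1 : (1 : F) - y ≠ 0 := sub_ne_zero.mpr (Ne.symm hy)
      field_simp
      ring
    · intro u hu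
      simp only [Finset.mem_erase, Finset.mem_univ, and_true] at hu
      exact key u hu
  rw [h2]
  have h3 := Finset.add_sum_erase Finset.univ (fun y => quadraticChar F y)
    (Finset.mem_univ (1 : F))
  rw [quadraticChar_sum_zero hF] at h3
  have : quadraticChar F 1 = 1 := map_one _
  linarith [h3, this]

lemma paley_corr2 (hF : ringChar F ≠ 2) {a b : F} (hab : a ≠ b) :
    ∑ c : F, quadraticChar F (a - c) * quadraticChar F (b - c) = -1 := by
  refine (Fintype.sum_equiv (Equiv.subLeft a)
      (fun c => quadraticChar F (a - c) * quadraticChar F (b - c))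
      (fun u => quadraticChar F u * quadraticChar F (u - (a - b)))
      (fun c => by simp only [Equiv.subLeft_apply]; congr 1; ring)).trans
    (paley_corr hF (sub_ne_zero.mpr hab))

/-- The Paley entries function. -/
def paleyF (F : Type*) [Field F] [Fintype F] [DecidableEq F] :
    Option F → Option F → ℤ
  | none, none => 1
  | none, some _ => 1
  | some _, none => -1
  | some a, some b => (if a = b then 1 else 0) + quadraticChar F (a - b)

lemma paley_main (F : Type*) [Field F] [Fintype F] [DecidableEq F]
    (h4 : Fintype.card F % 4 = 3) :
    ∃ H : Matrix (Fin (Fintype.card F + 1)) (Fin (Fintype.card F + 1)) ℤ,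
      IsHadamard H := by
  have hF : ringChar F ≠ 2 := by
    intro h
    have := FiniteField.even_card_of_char_two h
    omega
  have hneg : quadraticChar F (-1 : F) = -1 :=
    quadraticChar_neg_one_iff_not_isSquare.mpr
      (by simp [FiniteField.isSquare_neg_one_iff, h4])
  have hskew : ∀ x : F, quadraticChar F (-x) = - quadraticChar F x := by
    intro x
    rw [show (-x : F) = -1 * x by ring, map_mul, hneg, neg_one_mul]
  have hmulself : ∀ x : F, x ≠ 0 → quadraticChar F x * quadraticChar F x = 1 := by
    intro x hx
    rw [← sq]; exact quadraticChar_sq_one hx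
  have hcard : Fintype.card (Option F) = Fintype.card F + 1 := by simp
  let e : Option F ≃ Fin (Fintype.card F + 1) := Fintype.equivFinOfCardEq hcard
  refine ⟨Matrix.of (fun i j => paleyF F (e.symm i) (e.symm j)), ?_, ?_⟩
  · intro i j
    rcases ha : e.symm i with _ | a <;> rcases hb : e.symm j with _ | b <;>
      simp only [Matrix.of_apply, ha, hb, paleyF]
    · simp
    · simp
    · simp
    · by_cases h : a = b
      · subst h; simp [paleyF]
      · simp only [h, if_false, zero_add]
        exact quadraticChar_dichotomy (sub_ne_zero.mpr h)
  · ext i j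
    rw [Matrix.mul_apply, Matrix.smul_apply, Matrix.one_apply, smul_ite, smul_eq_mul,
      mul_one, smul_zero]
    simp only [Matrix.transpose_apply, Matrix.of_apply]
    rw [Fintype.sum_equiv e.symm _
        (fun o => paleyF F (e.symm i) o * paleyF F (e.symm j) o) (fun k => rfl)]
    have hij : (i = j) ↔ (e.symm i = e.symm j) := e.symm.injective.eq_iff.symm
    have hite : (if i = j then ((Fintype.card F + 1 : ℕ) : ℤ) else 0)
        = (if e.symm i = e.symm j then ((Fintype.card F + 1 : ℕ) : ℤ) else 0) :=
      if_congr hij rfl rfl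
    rw [hite]
    rcases e.symm i with _ | a <;> rcases e.symm j with _ | b
    · -- none none
      simp only [paleyF, if_pos rfl]
      rw [Fintype.sum_option]
      simp only [one_mul, Finset.sum_const, Finset.card_univ, nsmul_eq_mul, mul_one]
      push_cast; ring
    · -- none, some b
      simp only [paleyF, reduceCtorEq, if_false]
      rw [Fintype.sum_option]
      simp only [paleyF]
      have : ∑ c : F, (1 : ℤ) * ((if b = c then 1 else 0) + quadraticChar F (b - c))
          = (∑ c : F, (if b = c then (1 : ℤ) else 0)) + ∑ c : F, quadraticChar F (b - c) := by
        rw [← Finset.sum_add_distrib]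
        exact Finset.sum_congr rfl (fun c _ => by ring)
      rw [this, paley_sum_char_sub hF b, Finset.sum_ite_eq]
      simp
    · -- some a, none
      simp only [paleyF, reduceCtorEq, if_false]
      rw [Fintype.sum_option]
      simp only [paleyF]
      have : ∑ c : F, ((if a = c then (1 : ℤ) else 0) + quadraticChar F (a - c)) * 1
          = (∑ c : F, (if a = c then (1 : ℤ) else 0)) + ∑ c : F, quadraticChar F (a - c) := by
        rw [← Finset.sum_add_distrib]
        exact Finset.sum_congr rfl (fun c _ => by ring)
      rw [this, paley_sum_char_sub hF a, Finset.sum_ite_eq]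
      simp
    · -- some a, some b
      simp only [paleyF, Option.some.injEq]
      rw [Fintype.sum_option]
      simp only [paleyF]
      by_cases hab : a = b
      · subst hab
        simp only [if_pos rfl]
        have hterm : ∀ c : F,
            ((if a = c then (1 : ℤ) else 0) + quadraticChar F (a - c)) *
              ((if a = c then (1 : ℤ) else 0) + quadraticChar F (a - c)) = 1 := by
          intro c
          by_cases h : a = c
          · subst h; simp
          · simp only [h, if_false, zero_add]
            exact hmulself _ (sub_ne_zero.mpr h)
        rw [Finset.sum_congr rfl (fun c _ => hterm c)]
        simp [Finset.card_univ]
        push_cast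
        ring
      · simp only [hab, if_false]
        have hterm : ∀ c : F,
            ((if a = c then (1 : ℤ) else 0) + quadraticChar F (a - c)) *
              ((if b = c then (1 : ℤ) else 0) + quadraticChar F (b - c))
            = quadraticChar F (a - c) * quadraticChar F (b - c)
              + (if b = c then quadraticChar F (a - c) else 0)
              + (if a = c then quadraticChar F (b - c) else 0) := by
          intro c
          by_cases h1 : a = c <;> by_cases h2 : b = c
          · exact absurd (h1.trans h2.symm) hab
          · subst h1; simp [hab, Ne.symm, h2]
          · subst h2; simp [h1]
          · simp [h1, h2]
        rw [Finset.sum_congr rfl (fun c _ => hterm c), Finset.sum_add_distrib,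
          Finset.sum_add_distrib, paley_corr2 hF hab, Finset.sum_ite_eq,
          Finset.sum_ite_eq]
        simp only [Finset.mem_univ, if_true]
        have : quadraticChar F (b - a) = - quadraticChar F (a - b) := by
          rw [show (b - a : F) = -(a - b) by ring, hskew]
        rw [this]
        ring

end Aux

/-- Paley construction: if q ≡ 3 (mod 4) is a prime power, there is a Hadamard matrix
of order q + 1. -/
theorem hadamard_paley (q : ℕ) (hq : IsPrimePow q) (h4 : q % 4 = 3) :
    ∃ H : Matrix (Fin (q + 1)) (Fin (q + 1)) ℤ, IsHadamard H := by
  obtain ⟨p, n, hp, hn, rfl⟩ := hq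
  haveI : Fact p.Prime := ⟨hp.nat_prime⟩
  letI : Fintype (GaloisField p n) := Fintype.ofFinite _
  letI : DecidableEq (GaloisField p n) := Classical.decEq _
  have hcard : Fintype.card (GaloisField p n) = p ^ n := by
    rw [← Nat.card_eq_fintype_card]; exact GaloisField.card p n hn.ne'
  rw [← hcard] at h4 ⊢
  exact paley_main (GaloisField p n) h4
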